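/- For any three unit vectors n̂_1, n̂_2, n̂_3 in ℝ³, √(1 + n̂_1·n̂_2) + √(1 + n̂_2·n̂_3) + √(1 + n̂_1·n̂_3) ≥ √2 (equivalently, writing n̂_i·n̂_j = cos θ_{ij}, one has |cos(θ_{12}/2)| + |cos(θ_{23}/2)| + |cos(θ_{13}/2)| ≥ 1). Consequently the necessary condition Σ_{(ij)} √(1 + n̂_i·n̂_j) < √2 for a state-independent quantum violation of the LSW inequality by noisy qubit POVMs can never be satisfied. -/

import Mathlib

open scoped RealInnerProductSpace

lemma sqrt_one_add_inner_eq (u v : EuclideanSpace ℝ (Fin 3))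
    (hu : ‖u‖ = 1) (hv : ‖v‖ = 1) :
    Real.sqrt (1 + ⟪u, v⟫) = ‖u + v‖ / Real.sqrt 2 := by
  have h : ‖u + v‖ ^ 2 = 2 * (1 + ⟪u, v⟫) := by
    rw [norm_add_sq_real, hu, hv]; ring
  have h1 : (1 + ⟪u, v⟫) = ‖u + v‖ ^ 2 / 2 := by linarith
  rw [h1, Real.sqrt_div' _ (by norm_num), Real.sqrt_sq (norm_nonneg _)]

/-- **No state-independent violation of the LSW inequality.** For any three unit vectors
`n̂₁, n̂₂, n̂₃` in `ℝ³`, one has `√(1 + n̂₁·n̂₂) + √(1 + n̂₂·n̂₃) + √(1 + n̂₁·n̂₃) ≥ √2`, so the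
necessary condition `Σ √(1 + n̂_i·n̂_j) < √2` for a state-independent quantum violation of the
LSW inequality can never be satisfied. -/
theorem sum_sqrt_one_add_inner_ge_sqrt_two
    (n₁ n₂ n₃ : EuclideanSpace ℝ (Fin 3))
    (h₁ : ‖n₁‖ = 1) (h₂ : ‖n₂‖ = 1) (h₃ : ‖n₃‖ = 1) :
    Real.sqrt 2 ≤
      Real.sqrt (1 + ⟪n₁, n₂⟫) + Real.sqrt (1 + ⟪n₂, n₃⟫) + Real.sqrt (1 + ⟪n₁, n₃⟫) := by
  rw [sqrt_one_add_inner_eq _ _ h₁ h₂, sqrt_one_add_inner_eq _ _ h₂ h₃,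
    sqrt_one_add_inner_eq _ _ h₁ h₃]
  have hs : (0:ℝ) < Real.sqrt 2 := by positivity
  rw [← add_div, ← add_div, le_div_iff₀ hs,
    Real.mul_self_sqrt (by norm_num)]
  have ha : ‖n₁ - n₃‖ ≤ ‖n₁ + n₂‖ + ‖n₂ + n₃‖ := by
    have : n₁ - n₃ = (n₁ + n₂) - (n₂ + n₃) := by abel
    rw [this]; exact norm_sub_le _ _
  have hb : (2:ℝ) ≤ ‖n₁ - n₃‖ + ‖n₁ + n₃‖ := by
    have h : (n₁ - n₃) + (n₁ + n₃) = (2:ℝ) • n₁ := by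
      rw [two_smul]; abel
    have := norm_add_le (n₁ - n₃) (n₁ + n₃)
    rw [h, norm_smul, h₁] at this
    simpa using this
  linarith
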